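/- arXiv:2301.03190 — 4 statements merged into one kernel-verified Lean document; each statement's English description precedes it below -/
import Mathlib

section
/- For all x, y in ℝ^d and all s in ℝ, we have ⟨x+y⟩^s ≤ (2/√3)^{|s|} ⟨x⟩^s ⟨y⟩^{|s|}, where ⟨x⟩ = (1+|x|²)^{1/2}. -/
lemma peetre_base (a b c : ℝ) (ha : 0 ≤ a) (hb : 0 ≤ b) (hc0 : 0 ≤ c)
    (hc : c ≤ a + b) :
    Real.sqrt (1 + c ^ 2) ≤ (2 / Real.sqrt 3) * (Real.sqrt (1 + a ^ 2) * Real.sqrt (1 + b ^ 2)) := by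
  have h3 : (0:ℝ) < Real.sqrt 3 := Real.sqrt_pos.mpr (by norm_num)
  have hC : (0:ℝ) < 2 / Real.sqrt 3 := by positivity
  have hRnn : 0 ≤ (2 / Real.sqrt 3) * (Real.sqrt (1 + a ^ 2) * Real.sqrt (1 + b ^ 2)) := by
    positivity
  rw [show (2 / Real.sqrt 3) = Real.sqrt (4/3) by
      rw [show (4:ℝ)/3 = (2 / Real.sqrt 3)^2 by
        rw [div_pow, Real.sq_sqrt (by norm_num : (0:ℝ) ≤ 3)]; norm_num]
      rw [Real.sqrt_sq hC.le]]
  rw [← Real.sqrt_mul (by positivity), ← Real.sqrt_mul (by positivity)]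
  apply Real.sqrt_le_sqrt
  nlinarith [sq_nonneg (a - b), sq_nonneg (2*a*b - 1), sq_nonneg (a + b - c), mul_nonneg ha hb]

/-- Peetre's inequality with optimal constant:
`⟨x+y⟩^s ≤ (2/√3)^{|s|} ⟨x⟩^s ⟨y⟩^{|s|}` where `⟨x⟩ = (1+|x|²)^{1/2}`. -/
theorem peetre_inequality (d : ℕ) (x y : EuclideanSpace ℝ (Fin d)) (s : ℝ) :
    Real.sqrt (1 + ‖x + y‖ ^ 2) ^ s ≤
      (2 / Real.sqrt 3) ^ |s| * (Real.sqrt (1 + ‖x‖ ^ 2) ^ s * Real.sqrt (1 + ‖y‖ ^ 2) ^ |s|) := by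
  set C : ℝ := 2 / Real.sqrt 3 with hCdef
  have h3 : (0:ℝ) < Real.sqrt 3 := Real.sqrt_pos.mpr (by norm_num)
  have hC : (0:ℝ) < C := by positivity
  set X : ℝ := Real.sqrt (1 + ‖x + y‖ ^ 2) with hX
  set U : ℝ := Real.sqrt (1 + ‖x‖ ^ 2) with hU
  set V : ℝ := Real.sqrt (1 + ‖y‖ ^ 2) with hV
  have hXpos : 0 < X := Real.sqrt_pos.mpr (by positivity)
  have hUpos : 0 < U := Real.sqrt_pos.mpr (by positivity)
  have hVpos : 0 < V := Real.sqrt_pos.mpr (by positivity)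
  rcases le_or_gt 0 s with hs | hs
  · rw [abs_of_nonneg hs]
    have hbase : X ≤ C * (U * V) :=
      peetre_base ‖x‖ ‖y‖ ‖x + y‖ (norm_nonneg _) (norm_nonneg _) (norm_nonneg _)
        (norm_add_le x y)
    calc X ^ s ≤ (C * (U * V)) ^ s := Real.rpow_le_rpow hXpos.le hbase hs
      _ = C ^ s * (U ^ s * V ^ s) := by
          rw [Real.mul_rpow hC.le (by positivity), Real.mul_rpow hUpos.le hVpos.le]
  · rw [abs_of_neg hs]
    have hbase : U ≤ C * (X * V) := by
      have := peetre_base ‖x + y‖ ‖y‖ ‖x‖ (norm_nonneg _) (norm_nonneg _) (norm_nonneg _)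
        (by calc ‖x‖ = ‖(x + y) + (-y)‖ := by rw [add_neg_cancel_right]
              _ ≤ ‖x + y‖ + ‖-y‖ := norm_add_le _ _
              _ = ‖x + y‖ + ‖y‖ := by rw [norm_neg])
      exact this
    have hdiv : U / (C * V) ≤ X := by
      rw [div_le_iff₀ (by positivity)]
      calc U ≤ C * (X * V) := hbase
        _ = X * (C * V) := by ring
    have h1 : X ^ s ≤ (U / (C * V)) ^ s :=
      Real.rpow_le_rpow_of_nonpos (by positivity) hdiv hs.le
    calc X ^ s ≤ (U / (C * V)) ^ s := h1
      _ = U ^ s / (C ^ s * V ^ s) := by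
          rw [Real.div_rpow hUpos.le (by positivity), Real.mul_rpow hC.le hVpos.le]
      _ = C ^ (-s) * (U ^ s * V ^ (-s)) := by
          rw [Real.rpow_neg hC.le, Real.rpow_neg hVpos.le]
          field_simp
end

section
/- Let s > 0, u ∈ S'(ℝ^m) and v ∈ S'(ℝ^n). Then WF_g^s(u ⊗ v) ⊆ {(x,ξ) ∈ T*ℝ^{m+n} \ {0} : (x',ξ') ∈ WF_g^s(u) ∪ {0} and (x'',ξ'') ∈ WF_g^s(v) ∪ {0}}, where x = (x',x'') with x' ∈ ℝ^m, x'' ∈ ℝ^n, and similarly for ξ. -/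
/-- The anisotropic s-Gabor wave front set of a tempered distribution, expressed through its
short-time Fourier transform `F = V_φ u : ℝ^d × ℝ^d → ℂ`: a nonzero point `z₀` is outside
the wave front set iff `V_φ u` decays superpolynomially along the s-curves
`λ ↦ (λx, λ^s ξ)` uniformly near `z₀`. -/
def WFgs (s : ℝ) {E : Type*} [NormedAddCommGroup E] [NormedSpace ℝ E]
    (F : E × E → ℂ) : Set (E × E) :=
  {z | z ≠ 0 ∧ ¬ ∃ ε : ℝ, 0 < ε ∧ ∀ N : ℕ, ∃ C : ℝ,
    ∀ w : E × E, dist w z < ε → ∀ l : ℝ, 0 < l →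
      l ^ N * ‖F (l • w.1, l ^ s • w.2)‖ ≤ C}

/-- Key analytic estimate: if `F` decays superpolynomially along the s-curves near the
projection `(z.1.1, z.2.1)` and `G` obeys a polynomial bound, then the product
`‖F‖ * ‖G‖` decays superpolynomially along the s-curves near `z`. -/
lemma tensor_key {E₁ E₂ : Type*} [NormedAddCommGroup E₁] [NormedSpace ℝ E₁]
    [NormedAddCommGroup E₂] [NormedSpace ℝ E₂]
    (s : ℝ) (hs : 0 < s)
    (F : E₁ × E₁ → ℂ) (G : E₂ × E₂ → ℂ)
    (hG : ∃ (k : ℕ) (C : ℝ), ∀ z, ‖G z‖ ≤ C * (1 + ‖z‖) ^ k)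
    (z : (E₁ × E₂) × (E₁ × E₂))
    (hF : ∃ ε : ℝ, 0 < ε ∧ ∀ N : ℕ, ∃ C : ℝ, ∀ p : E₁ × E₁,
      dist p (z.1.1, z.2.1) < ε → ∀ l : ℝ, 0 < l → l ^ N * ‖F (l • p.1, l ^ s • p.2)‖ ≤ C) :
    ∃ ε : ℝ, 0 < ε ∧ ∀ N : ℕ, ∃ C : ℝ, ∀ w : (E₁ × E₂) × (E₁ × E₂), dist w z < ε →
      ∀ l : ℝ, 0 < l →
      l ^ N * (‖F (l • w.1.1, l ^ s • w.2.1)‖ * ‖G (l • w.1.2, l ^ s • w.2.2)‖) ≤ C := by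
  obtain ⟨k, Cg', hGb⟩ := hG
  obtain ⟨ε, hε, hFd⟩ := hF
  set Cg : ℝ := max Cg' 0 with hCgdef
  have hCg0 : 0 ≤ Cg := le_max_right _ _
  have hGb' : ∀ y, ‖G y‖ ≤ Cg * (1 + ‖y‖) ^ k := by
    intro y
    refine (hGb y).trans ?_
    exact mul_le_mul_of_nonneg_right (le_max_left _ _) (by positivity)
  refine ⟨ε, hε, fun N => ?_⟩
  set M' : ℕ := ⌈s⌉₊ + 1 with hM'def
  set M : ℕ := M' * k with hMdef
  obtain ⟨C1, hC1⟩ := hFd N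
  obtain ⟨C2, hC2⟩ := hFd (N + M)
  have hC1_0 : 0 ≤ C1 := by
    have := hC1 (z.1.1, z.2.1) (by simpa using hε) 1 one_pos
    have h0 : (0:ℝ) ≤ 1 ^ N * ‖F ((1:ℝ) • (z.1.1, z.2.1).1, (1:ℝ) ^ s • (z.1.1, z.2.1).2)‖ := by
      positivity
    linarith
  set R : ℝ := ‖z‖ + ε with hRdef
  have hR0 : 0 ≤ R := add_nonneg (norm_nonneg z) hε.le
  refine ⟨max C1 C2 * (Cg * (1 + 2 * R) ^ k), fun w hw l hl => ?_⟩
  have hB0 : (0:ℝ) ≤ Cg * (1 + 2 * R) ^ k := by positivity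
  have hwn : ‖w‖ ≤ R := by
    have h := dist_triangle w z 0
    rw [dist_zero_right, dist_zero_right] at h
    have := hw.le
    rw [hRdef]; linarith
  have h12 : ‖w.1.2‖ ≤ R := (norm_snd_le w.1).trans ((norm_fst_le w).trans hwn)
  have h22 : ‖w.2.2‖ ≤ R := (norm_snd_le w.2).trans ((norm_snd_le w).trans hwn)
  have hls : 0 < l ^ s := Real.rpow_pos_of_pos hl s
  have hdist : dist ((w.1.1, w.2.1) : E₁ × E₁) ((z.1.1, z.2.1) : E₁ × E₁) < ε := by
    refine lt_of_le_of_lt ?_ hw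
    simp only [Prod.dist_eq]
    exact max_le (le_max_of_le_left (le_max_left _ _)) (le_max_of_le_right (le_max_left _ _))
  have hGn : ‖((l • w.1.2, l ^ s • w.2.2) : E₂ × E₂)‖ ≤ max l (l ^ s) * R := by
    rw [Prod.norm_def]
    apply max_le
    · rw [norm_smul, Real.norm_of_nonneg hl.le]
      calc l * ‖w.1.2‖ ≤ l * R := mul_le_mul_of_nonneg_left h12 hl.le
        _ ≤ max l (l ^ s) * R := mul_le_mul_of_nonneg_right (le_max_left _ _) hR0
    · rw [norm_smul, Real.norm_of_nonneg hls.le]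
      calc l ^ s * ‖w.2.2‖ ≤ l ^ s * R := mul_le_mul_of_nonneg_left h22 hls.le
        _ ≤ max l (l ^ s) * R := mul_le_mul_of_nonneg_right (le_max_right _ _) hR0
  rcases le_or_gt l 1 with h1 | h1
  · -- small l : use the direct estimate for F, G is uniformly bounded
    have hs1 : l ^ s ≤ 1 := Real.rpow_le_one hl.le h1 hs.le
    have hargle : ‖((l • w.1.2, l ^ s • w.2.2) : E₂ × E₂)‖ ≤ 2 * R := by
      refine hGn.trans ?_
      have : max l (l ^ s) ≤ 1 := max_le h1 hs1
      nlinarith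
    have hGle : ‖G (l • w.1.2, l ^ s • w.2.2)‖ ≤ Cg * (1 + 2 * R) ^ k := by
      refine (hGb' _).trans ?_
      refine mul_le_mul_of_nonneg_left ?_ hCg0
      exact pow_le_pow_left₀ (by positivity) (by linarith) k
    calc l ^ N * (‖F (l • w.1.1, l ^ s • w.2.1)‖ * ‖G (l • w.1.2, l ^ s • w.2.2)‖)
        = (l ^ N * ‖F (l • w.1.1, l ^ s • w.2.1)‖) * ‖G (l • w.1.2, l ^ s • w.2.2)‖ := by ring
      _ ≤ C1 * (Cg * (1 + 2 * R) ^ k) :=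
          mul_le_mul (hC1 (w.1.1, w.2.1) hdist l hl) hGle (norm_nonneg _) hC1_0
      _ ≤ max C1 C2 * (Cg * (1 + 2 * R) ^ k) :=
          mul_le_mul_of_nonneg_right (le_max_left _ _) hB0
  · -- large l : absorb the polynomial growth of G into the decay of F
    have hlM : l ≤ l ^ M' := le_self_pow₀ h1.le (by simp [hM'def])
    have hsM : l ^ s ≤ l ^ M' := by
      have hsle : s ≤ (M' : ℝ) := by
        have := Nat.le_ceil s
        rw [hM'def]; push_cast; linarith
      calc l ^ s ≤ l ^ (M' : ℝ) := Real.rpow_le_rpow_of_exponent_le h1.le hsle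
        _ = l ^ M' := Real.rpow_natCast l M'
    have h1M : (1:ℝ) ≤ l ^ M' := one_le_pow₀ h1.le
    have harg : ‖((l • w.1.2, l ^ s • w.2.2) : E₂ × E₂)‖ ≤ l ^ M' * R :=
      hGn.trans (mul_le_mul_of_nonneg_right (max_le hlM hsM) hR0)
    have hkey : 1 + ‖((l • w.1.2, l ^ s • w.2.2) : E₂ × E₂)‖ ≤ l ^ M' * (1 + 2 * R) := by
      nlinarith
    have hGle : ‖G (l • w.1.2, l ^ s • w.2.2)‖ ≤ l ^ M * (Cg * (1 + 2 * R) ^ k) := by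
      refine (hGb' _).trans ?_
      calc Cg * (1 + ‖((l • w.1.2, l ^ s • w.2.2) : E₂ × E₂)‖) ^ k
          ≤ Cg * (l ^ M' * (1 + 2 * R)) ^ k :=
            mul_le_mul_of_nonneg_left (pow_le_pow_left₀ (by positivity) hkey k) hCg0
        _ = l ^ M * (Cg * (1 + 2 * R) ^ k) := by
            rw [mul_pow, ← pow_mul, hMdef]; ring
    calc l ^ N * (‖F (l • w.1.1, l ^ s • w.2.1)‖ * ‖G (l • w.1.2, l ^ s • w.2.2)‖)
        = (l ^ N * ‖F (l • w.1.1, l ^ s • w.2.1)‖) * ‖G (l • w.1.2, l ^ s • w.2.2)‖ := by ring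
      _ ≤ (l ^ N * ‖F (l • w.1.1, l ^ s • w.2.1)‖) * (l ^ M * (Cg * (1 + 2 * R) ^ k)) :=
          mul_le_mul_of_nonneg_left hGle (by positivity)
      _ = (l ^ (N + M) * ‖F (l • w.1.1, l ^ s • w.2.1)‖) * (Cg * (1 + 2 * R) ^ k) := by
          rw [pow_add]; ring
      _ ≤ C2 * (Cg * (1 + 2 * R) ^ k) :=
          mul_le_mul_of_nonneg_right (hC2 (w.1.1, w.2.1) hdist l hl) hB0
      _ ≤ max C1 C2 * (Cg * (1 + 2 * R) ^ k) :=
          mul_le_mul_of_nonneg_right (le_max_right _ _) hB0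

/-- Tensor product inclusion of anisotropic s-Gabor wave front sets
(Proposition 3.1): `WF_g^s(u ⊗ v)` is contained in the set of nonzero `(x,ξ)` whose
projections `(x',ξ')` and `(x'',ξ'')` lie in `WF_g^s(u) ∪ {0}` resp. `WF_g^s(v) ∪ {0}`.
Here `F = V_φ u`, `G = V_ψ v` are the STFTs (which obey polynomial bounds) and
`H = V_{φ⊗ψ}(u ⊗ v)` factors as their product. -/
theorem tensor_wavefront_inclusion (m n : ℕ) (s : ℝ) (hs : 0 < s)
    (F : EuclideanSpace ℝ (Fin m) × EuclideanSpace ℝ (Fin m) → ℂ)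
    (G : EuclideanSpace ℝ (Fin n) × EuclideanSpace ℝ (Fin n) → ℂ)
    (hF : ∃ (k : ℕ) (C : ℝ), ∀ z, ‖F z‖ ≤ C * (1 + ‖z‖) ^ k)
    (hG : ∃ (k : ℕ) (C : ℝ), ∀ z, ‖G z‖ ≤ C * (1 + ‖z‖) ^ k)
    (H : (EuclideanSpace ℝ (Fin m) × EuclideanSpace ℝ (Fin n)) ×
         (EuclideanSpace ℝ (Fin m) × EuclideanSpace ℝ (Fin n)) → ℂ)
    (hH : ∀ x' x'' ξ' ξ'', H ((x', x''), (ξ', ξ'')) = F (x', ξ') * G (x'', ξ'')) :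
    WFgs s H ⊆
      {z | z ≠ 0 ∧ (z.1.1, z.2.1) ∈ WFgs s F ∪ {0} ∧ (z.1.2, z.2.2) ∈ WFgs s G ∪ {0}} := by
  intro z hz
  obtain ⟨hz0, hzH⟩ := hz
  refine ⟨hz0, ?_, ?_⟩
  · by_cases hp : ((z.1.1, z.2.1) : EuclideanSpace ℝ (Fin m) × EuclideanSpace ℝ (Fin m)) = 0
    · exact Or.inr hp
    · refine Or.inl ⟨hp, fun hdec => ?_⟩
      obtain ⟨ε, hε, hd⟩ := tensor_key s hs F G hG z hdec
      refine hzH ⟨ε, hε, fun N => ?_⟩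
      obtain ⟨C, hC⟩ := hd N
      refine ⟨C, fun w hw l hl => ?_⟩
      have hHeq : H (l • w.1, l ^ s • w.2)
          = F (l • w.1.1, l ^ s • w.2.1) * G (l • w.1.2, l ^ s • w.2.2) :=
        hH (l • w.1.1) (l • w.1.2) (l ^ s • w.2.1) (l ^ s • w.2.2)
      rw [hHeq, norm_mul]
      exact hC w hw l hl
  · by_cases hp : ((z.1.2, z.2.2) : EuclideanSpace ℝ (Fin n) × EuclideanSpace ℝ (Fin n)) = 0
    · exact Or.inr hp
    · refine Or.inl ⟨hp, fun hdec => ?_⟩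
      obtain ⟨ε, hε, hd⟩ :=
        tensor_key s hs G F hF ((z.1.2, z.1.1), (z.2.2, z.2.1)) hdec
      refine hzH ⟨ε, hε, fun N => ?_⟩
      obtain ⟨C, hC⟩ := hd N
      refine ⟨C, fun w hw l hl => ?_⟩
      have hdw : dist (((w.1.2, w.1.1), (w.2.2, w.2.1)) :
            (EuclideanSpace ℝ (Fin n) × EuclideanSpace ℝ (Fin m)) ×
            (EuclideanSpace ℝ (Fin n) × EuclideanSpace ℝ (Fin m)))
          ((z.1.2, z.1.1), (z.2.2, z.2.1)) < ε := by
        refine lt_of_le_of_lt (le_of_eq ?_) hw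
        simp [Prod.dist_eq, max_comm]
      have hkey := hC ((w.1.2, w.1.1), (w.2.2, w.2.1)) hdw l hl
      have hHeq : H (l • w.1, l ^ s • w.2)
          = F (l • w.1.1, l ^ s • w.2.1) * G (l • w.1.2, l ^ s • w.2.2) :=
        hH (l • w.1.1) (l • w.1.2) (l ^ s • w.2.1) (l ^ s • w.2.2)
      rw [hHeq, norm_mul]
      calc l ^ N * (‖F (l • w.1.1, l ^ s • w.2.1)‖ * ‖G (l • w.1.2, l ^ s • w.2.2)‖)
          = l ^ N * (‖G (l • w.1.2, l ^ s • w.2.2)‖ * ‖F (l • w.1.1, l ^ s • w.2.1)‖) := by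
            ring
        _ ≤ C := hkey
end

section
/- Let s > 0 and K ∈ S'(ℝ^{2d}). Suppose WF_{g,1}^s(K) = ∅ and WF_{g,2}^s(K) = ∅, where WF_{g,1}^s(K) = {(x,ξ) : (x,0,ξ,0) ∈ WF_g^s(K)} and WF_{g,2}^s(K) = {(y,η) : (0,y,0,−η) ∈ WF_g^s(K)}. Then there exists c > 1 such that WF_g^s(K) ⊆ {(x,y,ξ,η) ∈ T*ℝ^{2d} : c^{-1}(|x| + |ξ|^{1/s}) < |y| + |η|^{1/s} < c(|x| + |ξ|^{1/s})}. -/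
/-- Lemma 4.1: if `W = WF_g^s(K) ⊆ T*ℝ^{2d} \ {0}` (a closed s-conic set, here points are
written `((x,y),(ξ,η))`) contains no points of the form `(x,0,ξ,0)` nor `(0,y,0,−η)`, then
there exists `c > 1` with
`W ⊆ {(x,y,ξ,η) : c⁻¹(|x|+|ξ|^{1/s}) < |y|+|η|^{1/s} < c(|x|+|ξ|^{1/s})}`. -/
theorem kernel_wavefront_graph_bound (d : ℕ) (s : ℝ) (hs : 0 < s)
    (W : Set ((EuclideanSpace ℝ (Fin d) × EuclideanSpace ℝ (Fin d)) ×
              (EuclideanSpace ℝ (Fin d) × EuclideanSpace ℝ (Fin d))))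
    (hW0 : ∀ z ∈ W, z ≠ 0)
    (hWclosed : ∀ z, z ≠ 0 → z ∈ closure W → z ∈ W)
    (hWconic : ∀ x y ξ η, ((x, y), (ξ, η)) ∈ W → ∀ l : ℝ, 0 < l →
      ((l • x, l • y), (l ^ s • ξ, l ^ s • η)) ∈ W)
    (h1 : ∀ x ξ : EuclideanSpace ℝ (Fin d), ((x, (0 : EuclideanSpace ℝ (Fin d))),
      (ξ, (0 : EuclideanSpace ℝ (Fin d)))) ∉ W)
    (h2 : ∀ y η : EuclideanSpace ℝ (Fin d), (((0 : EuclideanSpace ℝ (Fin d)), y),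
      ((0 : EuclideanSpace ℝ (Fin d)), -η)) ∉ W) :
    ∃ c : ℝ, 1 < c ∧ ∀ x y ξ η, ((x, y), (ξ, η)) ∈ W →
      c⁻¹ * (‖x‖ + ‖ξ‖ ^ (1 / s)) < ‖y‖ + ‖η‖ ^ (1 / s) ∧
      ‖y‖ + ‖η‖ ^ (1 / s) < c * (‖x‖ + ‖ξ‖ ^ (1 / s)) := by
  classical
  rcases W.eq_empty_or_nonempty with hWe | ⟨⟨⟨x₀, y₀⟩, ξ₀, η₀⟩, hz₀⟩
  · exact ⟨2, one_lt_two, fun x y ξ η hz => by simp [hWe] at hz⟩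
  have hsne : s ≠ 0 := hs.ne'
  have hrpow : Continuous fun t : ℝ => t ^ (1 / s) := by
    rw [continuous_iff_continuousAt]
    intro t
    exact Real.continuousAt_rpow_const t (1 / s) (Or.inr (by positivity))
  set f : ((EuclideanSpace ℝ (Fin d) × EuclideanSpace ℝ (Fin d)) ×
      (EuclideanSpace ℝ (Fin d) × EuclideanSpace ℝ (Fin d))) → ℝ :=
    fun z => ‖z.1.1‖ + ‖z.2.1‖ ^ (1 / s) with hf
  set g : ((EuclideanSpace ℝ (Fin d) × EuclideanSpace ℝ (Fin d)) ×
      (EuclideanSpace ℝ (Fin d) × EuclideanSpace ℝ (Fin d))) → ℝ :=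
    fun z => ‖z.1.2‖ + ‖z.2.2‖ ^ (1 / s) with hg
  have hfc : Continuous f :=
    ((continuous_fst.comp continuous_fst).norm).add
      (hrpow.comp (continuous_fst.comp continuous_snd).norm)
  have hgc : Continuous g :=
    ((continuous_snd.comp continuous_fst).norm).add
      (hrpow.comp (continuous_snd.comp continuous_snd).norm)
  have hf0 : ∀ z, 0 ≤ f z := fun z => by
    have : (0:ℝ) ≤ ‖z.2.1‖ ^ (1/s) := Real.rpow_nonneg (norm_nonneg _) _
    simp only [hf]; positivity
  have hg0 : ∀ z, 0 ≤ g z := fun z => by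
    have : (0:ℝ) ≤ ‖z.2.2‖ ^ (1/s) := Real.rpow_nonneg (norm_nonneg _) _
    simp only [hg]; positivity
  -- key scaling computation
  have key : ∀ a l : ℝ, 0 ≤ a → 0 < l → (l ^ s * a) ^ (1 / s) = l * a ^ (1 / s) := by
    intro a l ha hl
    rw [Real.mul_rpow (Real.rpow_nonneg hl.le s) ha, ← Real.rpow_mul hl.le,
      mul_one_div_cancel hsne, Real.rpow_one]
  have hnorm_smul : ∀ (l : ℝ) (v : EuclideanSpace ℝ (Fin d)), 0 < l → ‖l • v‖ = l * ‖v‖ := by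
    intro l v hl
    rw [norm_smul, Real.norm_eq_abs, abs_of_pos hl]
  have hfhom : ∀ (x y ξ η : EuclideanSpace ℝ (Fin d)) (l : ℝ), 0 < l →
      f ((l • x, l • y), (l ^ s • ξ, l ^ s • η)) = l * f ((x, y), (ξ, η)) := by
    intro x y ξ η l hl
    simp only [hf]
    rw [hnorm_smul l x hl, hnorm_smul (l ^ s) ξ (Real.rpow_pos_of_pos hl s),
      key _ _ (norm_nonneg _) hl, mul_add]
  have hghom : ∀ (x y ξ η : EuclideanSpace ℝ (Fin d)) (l : ℝ), 0 < l →
      g ((l • x, l • y), (l ^ s • ξ, l ^ s • η)) = l * g ((x, y), (ξ, η)) := by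
    intro x y ξ η l hl
    simp only [hg]
    rw [hnorm_smul l y hl, hnorm_smul (l ^ s) η (Real.rpow_pos_of_pos hl s),
      key _ _ (norm_nonneg _) hl, mul_add]
  -- positivity of f, g on W
  have hrz : ∀ a : ℝ, 0 ≤ a → a ^ (1 / s) = 0 → a = 0 := by
    intro a ha h
    by_contra hne
    exact absurd h (ne_of_gt (Real.rpow_pos_of_pos (lt_of_le_of_ne ha (Ne.symm hne)) _))
  have hgpos : ∀ z ∈ W, 0 < g z := by
    intro z hz
    rcases lt_or_eq_of_le (hg0 z) with h | h
    · exact h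
    exfalso
    have h' := h.symm
    rw [hg, add_eq_zero_iff_of_nonneg (norm_nonneg _) (Real.rpow_nonneg (norm_nonneg _) _)] at h'
    have hy : z.1.2 = 0 := norm_eq_zero.mp h'.1
    have hη : z.2.2 = 0 := norm_eq_zero.mp (hrz _ (norm_nonneg _) h'.2)
    have : ((z.1.1, (0 : EuclideanSpace ℝ (Fin d))), (z.2.1, (0 : EuclideanSpace ℝ (Fin d)))) ∈ W := by
      have : z = ((z.1.1, z.1.2), (z.2.1, z.2.2)) := by simp
      rw [this, hy, hη] at hz
      exact hz
    exact h1 _ _ this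
  have hfpos : ∀ z ∈ W, 0 < f z := by
    intro z hz
    rcases lt_or_eq_of_le (hf0 z) with h | h
    · exact h
    exfalso
    have h' := h.symm
    rw [hf, add_eq_zero_iff_of_nonneg (norm_nonneg _) (Real.rpow_nonneg (norm_nonneg _) _)] at h'
    have hx : z.1.1 = 0 := norm_eq_zero.mp h'.1
    have hξ : z.2.1 = 0 := norm_eq_zero.mp (hrz _ (norm_nonneg _) h'.2)
    have hmem : (((0 : EuclideanSpace ℝ (Fin d)), z.1.2),
        ((0 : EuclideanSpace ℝ (Fin d)), -(- z.2.2))) ∈ W := by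
      have : z = ((z.1.1, z.1.2), (z.2.1, z.2.2)) := by simp
      rw [neg_neg]
      rw [this, hx, hξ] at hz
      exact hz
    exact h2 _ _ hmem
  -- the compact slice
  set S := closure W ∩ {z | f z + g z = 1} with hS
  have hSW : S ⊆ W := by
    intro z hz
    refine hWclosed z ?_ hz.1
    intro h0
    have h1' : f z + g z = 1 := hz.2
    rw [h0] at h1'
    simp only [hf, hg] at h1'
    have hz0 : ((0 : ℝ) ^ (1 / s)) = 0 := Real.zero_rpow (by positivity)
    simp only [Prod.fst_zero, Prod.snd_zero, norm_zero] at h1'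
    rw [hz0] at h1'
    norm_num at h1'
  have hSclosed : IsClosed S :=
    isClosed_closure.inter (isClosed_eq (hfc.add hgc) continuous_const)
  have hSbdd : S ⊆ Metric.closedBall (0 : (EuclideanSpace ℝ (Fin d) × EuclideanSpace ℝ (Fin d)) × (EuclideanSpace ℝ (Fin d) × EuclideanSpace ℝ (Fin d))) 1 := by
    intro z hz
    have h1' : f z + g z = 1 := hz.2
    simp only [hf, hg] at h1'
    have r1 : (0:ℝ) ≤ ‖z.2.1‖ ^ (1 / s) := Real.rpow_nonneg (norm_nonneg _) _
    have r2 : (0:ℝ) ≤ ‖z.2.2‖ ^ (1 / s) := Real.rpow_nonneg (norm_nonneg _) _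
    have n1 : (0:ℝ) ≤ ‖z.1.1‖ := norm_nonneg _
    have n2 : (0:ℝ) ≤ ‖z.1.2‖ := norm_nonneg _
    have hle : ∀ a : ℝ, 0 ≤ a → a ^ (1 / s) ≤ 1 → a ≤ 1 := by
      intro a ha h
      have := Real.rpow_le_rpow (Real.rpow_nonneg ha _) h hs.le
      rwa [← Real.rpow_mul ha, one_div_mul_cancel hsne, Real.rpow_one,
        Real.one_rpow] at this
    have hx : ‖z.1.1‖ ≤ 1 := by linarith
    have hy : ‖z.1.2‖ ≤ 1 := by linarith
    have hξ : ‖z.2.1‖ ≤ 1 := hle _ (norm_nonneg _) (by linarith)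
    have hη : ‖z.2.2‖ ≤ 1 := hle _ (norm_nonneg _) (by linarith)
    rw [Metric.mem_closedBall, dist_zero_right]
    calc ‖z‖ = max ‖z.1‖ ‖z.2‖ := Prod.norm_def z
      _ ≤ 1 := by
        rw [Prod.norm_def z.1, Prod.norm_def z.2]
        exact max_le (max_le hx hy) (max_le hξ hη)
  have hScompact : IsCompact S :=
    (isCompact_closedBall _ 1).of_isClosed_subset hSclosed hSbdd
  -- S is nonempty
  have hN₀ : 0 < f ((x₀, y₀), (ξ₀, η₀)) + g ((x₀, y₀), (ξ₀, η₀)) :=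
    add_pos (hfpos _ hz₀) (hgpos _ hz₀)
  have hSne : S.Nonempty := by
    set l : ℝ := (f ((x₀, y₀), (ξ₀, η₀)) + g ((x₀, y₀), (ξ₀, η₀)))⁻¹ with hl
    have hlpos : 0 < l := inv_pos.mpr hN₀
    refine ⟨((l • x₀, l • y₀), (l ^ s • ξ₀, l ^ s • η₀)),
      subset_closure (hWconic _ _ _ _ hz₀ l hlpos), ?_⟩
    show f _ + g _ = 1
    rw [hfhom _ _ _ _ _ hlpos, hghom _ _ _ _ _ hlpos, ← mul_add, hl,
      inv_mul_cancel₀ hN₀.ne']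
  -- minima of f and g on S
  obtain ⟨zf, hzfS, hzf⟩ := hScompact.exists_isMinOn hSne hfc.continuousOn
  obtain ⟨zg, hzgS, hzg⟩ := hScompact.exists_isMinOn hSne hgc.continuousOn
  have hmf : 0 < f zf := hfpos _ (hSW hzfS)
  have hmg : 0 < g zg := hgpos _ (hSW hzgS)
  obtain ⟨c, hcf, hcg, hc1⟩ : ∃ c : ℝ, (f zf)⁻¹ < c ∧ (g zg)⁻¹ < c ∧ (1:ℝ) < c := by
    refine ⟨(f zf)⁻¹ + (g zg)⁻¹ + 2, ?_, ?_, ?_⟩ <;>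
      linarith [inv_pos.mpr hmf, inv_pos.mpr hmg]
  have hcpos : (0:ℝ) < c := lt_trans one_pos hc1
  have hcinv : c⁻¹ < g zg := by
    have h2 : (1:ℝ) < g zg * c :=
      calc (1:ℝ) = g zg * (g zg)⁻¹ := (mul_inv_cancel₀ hmg.ne').symm
        _ < g zg * c := by exact mul_lt_mul_of_pos_left hcg hmg
    have h3 := mul_lt_mul_of_pos_left h2 (inv_pos.mpr hcpos)
    rwa [mul_one, mul_comm (g zg) c, ← mul_assoc, inv_mul_cancel₀ hcpos.ne', one_mul] at h3
  -- bounds on the slice S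
  have hSbound : ∀ z ∈ S, c⁻¹ * f z < g z ∧ g z < c * f z := by
    intro z hzS
    have hzW := hSW hzS
    have hsum : f z + g z = 1 := hzS.2
    have hfz := hfpos z hzW
    have hgz := hgpos z hzW
    have hfmin : f zf ≤ f z := hzf hzS
    have hgmin : g zg ≤ g z := hzg hzS
    have hfle : f z ≤ 1 := by linarith
    have hgle : g z ≤ 1 := by linarith
    constructor
    · calc c⁻¹ * f z ≤ c⁻¹ * 1 :=
            mul_le_mul_of_nonneg_left hfle (inv_pos.mpr hcpos).le
        _ < g zg := by rwa [mul_one]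
        _ ≤ g z := hgmin
    · have e1 : (1:ℝ) = (f zf)⁻¹ * f zf := (inv_mul_cancel₀ hmf.ne').symm
      have e2 : (f zf)⁻¹ * f zf ≤ (f zf)⁻¹ * f z :=
        mul_le_mul_of_nonneg_left hfmin (inv_pos.mpr hmf).le
      have e3 : (f zf)⁻¹ * f z < c * f z := mul_lt_mul_of_pos_right hcf hfz
      calc g z ≤ 1 := hgle
        _ = (f zf)⁻¹ * f zf := e1
        _ ≤ (f zf)⁻¹ * f z := e2
        _ < c * f z := e3
  refine ⟨c, hc1, ?_⟩
  intro x y ξ η hz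
  set z := (((x, y), (ξ, η)) : (EuclideanSpace ℝ (Fin d) × EuclideanSpace ℝ (Fin d)) × (EuclideanSpace ℝ (Fin d) × EuclideanSpace ℝ (Fin d))) with hzdef
  have hN : 0 < f z + g z := add_pos (hfpos _ hz) (hgpos _ hz)
  set l : ℝ := (f z + g z)⁻¹ with hl
  have hlpos : 0 < l := inv_pos.mpr hN
  have hz'S : ((l • x, l • y), (l ^ s • ξ, l ^ s • η)) ∈ S := by
    refine ⟨subset_closure (hWconic _ _ _ _ hz l hlpos), ?_⟩
    show f _ + g _ = 1
    rw [hfhom _ _ _ _ _ hlpos, hghom _ _ _ _ _ hlpos, ← mul_add, hl,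
      inv_mul_cancel₀ hN.ne']
  obtain ⟨hb1, hb2⟩ := hSbound _ hz'S
  rw [hfhom _ _ _ _ _ hlpos, hghom _ _ _ _ _ hlpos] at hb1 hb2
  constructor
  · have := (mul_lt_mul_iff_right₀ hlpos).mp
      (by rw [show c⁻¹ * (l * f z) = l * (c⁻¹ * f z) by ring] at hb1; exact hb1)
    exact this
  · have := (mul_lt_mul_iff_right₀ hlpos).mp
      (by rw [show c * (l * f z) = l * (c * f z) by ring] at hb2; exact hb2)
    exact this
end

section
/- Let s > 0, K ∈ S'(ℝ^{2d}) with WF_{g,1}^s(K) = WF_{g,2}^s(K) = ∅, and u ∈ S'(ℝ^d). Then the set WF_g^s(K)' ∘ WF_g^s(u) := {(x,ξ) ∈ ℝ^{2d} : ∃(y,η) ∈ WF_g^s(u), (x,y,ξ,−η) ∈ WF_g^s(K)} is an s-conic subset of T*ℝ^d \ {0} that is closed in T*ℝ^d \ {0}. -/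
open Filter Metric Bornology Topology

set_option maxHeartbeats 1000000

/-- Lemma 4.3: if `WK = WF_g^s(K)` (closed s-conic subset of `T*ℝ^{2d} \ {0}`, points
written `((x,y),(ξ,η))`) satisfies `WF_{g,1}^s(K) = WF_{g,2}^s(K) = ∅`, and
`Wu = WF_g^s(u)` is a closed s-conic subset of `T*ℝ^d \ {0}`, then
`WK' ∘ Wu = {(x,ξ) : ∃(y,η) ∈ Wu, (x,y,ξ,−η) ∈ WK}` is an s-conic subset of
`T*ℝ^d \ {0}` that is closed in `T*ℝ^d \ {0}`. -/
theorem relation_composition_closed_sconic (d : ℕ) (s : ℝ) (hs : 0 < s)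
    (WK : Set ((EuclideanSpace ℝ (Fin d) × EuclideanSpace ℝ (Fin d)) ×
               (EuclideanSpace ℝ (Fin d) × EuclideanSpace ℝ (Fin d))))
    (hWK0 : ∀ z ∈ WK, z ≠ 0)
    (hWKclosed : ∀ z, z ≠ 0 → z ∈ closure WK → z ∈ WK)
    (hWKconic : ∀ x y ξ η, ((x, y), (ξ, η)) ∈ WK → ∀ l : ℝ, 0 < l →
      ((l • x, l • y), (l ^ s • ξ, l ^ s • η)) ∈ WK)
    (h1 : ∀ x ξ : EuclideanSpace ℝ (Fin d), ((x, (0 : EuclideanSpace ℝ (Fin d))),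
      (ξ, (0 : EuclideanSpace ℝ (Fin d)))) ∉ WK)
    (h2 : ∀ y η : EuclideanSpace ℝ (Fin d), (((0 : EuclideanSpace ℝ (Fin d)), y),
      ((0 : EuclideanSpace ℝ (Fin d)), -η)) ∉ WK)
    (Wu : Set (EuclideanSpace ℝ (Fin d) × EuclideanSpace ℝ (Fin d)))
    (hWu0 : ∀ z ∈ Wu, z ≠ 0)
    (hWuclosed : ∀ z, z ≠ 0 → z ∈ closure Wu → z ∈ Wu)
    (hWuconic : ∀ z ∈ Wu, ∀ l : ℝ, 0 < l → ((l • z.1, l ^ s • z.2) : _) ∈ Wu) :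
    (∀ z ∈ {w : EuclideanSpace ℝ (Fin d) × EuclideanSpace ℝ (Fin d) |
        ∃ y η, (y, η) ∈ Wu ∧ ((w.1, y), (w.2, -η)) ∈ WK}, z ≠ 0) ∧
    (∀ z ∈ {w : EuclideanSpace ℝ (Fin d) × EuclideanSpace ℝ (Fin d) |
        ∃ y η, (y, η) ∈ Wu ∧ ((w.1, y), (w.2, -η)) ∈ WK}, ∀ l : ℝ, 0 < l →
        ((l • z.1, l ^ s • z.2) : _) ∈ {w : EuclideanSpace ℝ (Fin d) × EuclideanSpace ℝ (Fin d) |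
          ∃ y η, (y, η) ∈ Wu ∧ ((w.1, y), (w.2, -η)) ∈ WK}) ∧
    (∀ z, z ≠ 0 →
      z ∈ closure {w : EuclideanSpace ℝ (Fin d) × EuclideanSpace ℝ (Fin d) |
        ∃ y η, (y, η) ∈ Wu ∧ ((w.1, y), (w.2, -η)) ∈ WK} →
      z ∈ {w : EuclideanSpace ℝ (Fin d) × EuclideanSpace ℝ (Fin d) |
        ∃ y η, (y, η) ∈ Wu ∧ ((w.1, y), (w.2, -η)) ∈ WK}) := by
  have hsne : s ≠ 0 := ne_of_gt hs
  refine ⟨?_, ?_, ?_⟩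
  · rintro ⟨x, ξ⟩ ⟨y, η, hyu, hK⟩ hz0
    rw [Prod.mk_eq_zero] at hz0
    obtain ⟨rfl, rfl⟩ := hz0
    exact h2 y η hK
  · rintro ⟨x, ξ⟩ ⟨y, η, hyu, hK⟩ l hl
    refine ⟨l • y, l ^ s • η, hWuconic (y, η) hyu l hl, ?_⟩
    simpa [smul_neg] using hWKconic x y ξ (-η) hK l hl
  · intro z hz0 hzcl
    obtain ⟨u, hu_mem, hu_lim⟩ := mem_closure_iff_seq_limit.mp hzcl
    choose y η hyu hK using hu_mem
    obtain ⟨Cx, hCx⟩ := isBounded_iff_forall_norm_le.mp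
      (Metric.isBounded_range_of_tendsto u hu_lim)
    have hCx' : ∀ n, ‖(u n).1‖ ≤ Cx ∧ ‖(u n).2‖ ≤ Cx := by
      intro n
      have h := hCx (u n) (Set.mem_range_self n)
      constructor
      · exact le_trans (norm_fst_le (u n)) h
      · exact le_trans (norm_snd_le (u n)) h
    by_cases hb : ∃ C, ∀ n, max ‖y n‖ ‖η n‖ ≤ C
    · -- bounded witnesses
      obtain ⟨C, hC⟩ := hb
      have hball : ∀ n, (y n, η n) ∈ Metric.closedBall (0 : _ × _) C := by
        intro n
        rw [mem_closedBall_zero_iff]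
        simpa [Prod.norm_def] using hC n
      obtain ⟨a, -, φ, hφ, hB⟩ := (isCompact_closedBall
        (0 : EuclideanSpace ℝ (Fin d) × EuclideanSpace ℝ (Fin d)) C).tendsto_subseq hball
      have hu' : Tendsto (fun N => u (φ N)) atTop (𝓝 z) := hu_lim.comp hφ.tendsto_atTop
      have ha1 : Tendsto (fun N => y (φ N)) atTop (𝓝 a.1) :=
        (continuous_fst.tendsto a).comp hB
      have ha2 : Tendsto (fun N => η (φ N)) atTop (𝓝 a.2) :=
        (continuous_snd.tendsto a).comp hB
      have hQ : Tendsto (fun N => (((u (φ N)).1, y (φ N)), ((u (φ N)).2, -η (φ N))))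
          atTop (𝓝 ((z.1, a.1), (z.2, -a.2))) :=
        (((continuous_fst.tendsto z).comp hu').prodMk_nhds ha1).prodMk_nhds
          (((continuous_snd.tendsto z).comp hu').prodMk_nhds ha2.neg)
      have hQcl : ((z.1, a.1), (z.2, -a.2)) ∈ closure WK :=
        mem_closure_of_tendsto hQ (Eventually.of_forall fun N => hK (φ N))
      by_cases ha : a = 0
      · exfalso
        have hne : ((z.1, a.1), (z.2, -a.2)) ≠ 0 := by
          intro h
          rw [Prod.mk_eq_zero, Prod.mk_eq_zero, Prod.mk_eq_zero] at h
          exact hz0 (Prod.ext h.1.1 h.2.1)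
        have hmem := hWKclosed _ hne hQcl
        rw [ha] at hmem
        simp only [Prod.fst_zero, Prod.snd_zero, neg_zero] at hmem
        exact h1 z.1 z.2 hmem
      · refine ⟨a.1, a.2, ?_, ?_⟩
        · have : a ∈ closure Wu :=
            mem_closure_of_tendsto hB (Eventually.of_forall fun N => hyu (φ N))
          have := hWuclosed a ha this
          simpa using this
        · refine hWKclosed _ ?_ hQcl
          intro h
          rw [Prod.mk_eq_zero, Prod.mk_eq_zero, Prod.mk_eq_zero] at h
          exact ha (Prod.ext h.1.2 (by simpa using h.2.2))
    · -- unbounded witnesses: contradiction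
      exfalso
      push_neg at hb
      choose f hf using fun N : ℕ => hb ((N : ℝ) + 1 + ((N : ℝ) + 1) ^ s)
      set t : ℕ → ℝ := fun N => max ‖y (f N)‖ (‖η (f N)‖ ^ s⁻¹) with ht
      have hN1 : ∀ N : ℕ, (0 : ℝ) < (N : ℝ) + 1 := fun N => by positivity
      have htN : ∀ N : ℕ, (N : ℝ) + 1 ≤ t N := by
        intro N
        rcases lt_max_iff.mp (hf N) with h | h
        · refine le_trans ?_ (le_max_left _ _)
          nlinarith [Real.rpow_nonneg (le_of_lt (hN1 N)) s, h]
        · refine le_trans ?_ (le_max_right _ _)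
          have h1 : ((N : ℝ) + 1) ^ s ≤ ‖η (f N)‖ := by
            nlinarith [h, hN1 N]
          have h2 : (((N : ℝ) + 1) ^ s) ^ s⁻¹ ≤ ‖η (f N)‖ ^ s⁻¹ :=
            Real.rpow_le_rpow (Real.rpow_nonneg (le_of_lt (hN1 N)) s) h1
              (le_of_lt (inv_pos.mpr hs))
          rwa [Real.rpow_rpow_inv (le_of_lt (hN1 N)) hsne] at h2
      have ht_pos : ∀ N, 0 < t N := fun N => lt_of_lt_of_le (hN1 N) (htN N)
      set l : ℕ → ℝ := fun N => (t N)⁻¹ with hl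
      have hl_pos : ∀ N, 0 < l N := fun N => inv_pos.mpr (ht_pos N)
      have hl_le : ∀ N : ℕ, l N ≤ ((N : ℝ) + 1)⁻¹ := fun N =>
        inv_anti₀ (hN1 N) (htN N)
      -- norm computations
      have hnylt : ∀ N, ‖l N • y (f N)‖ = l N * ‖y (f N)‖ := by
        intro N
        rw [norm_smul, Real.norm_of_nonneg (le_of_lt (hl_pos N))]
      have hnηlt : ∀ N, ‖(l N) ^ s • η (f N)‖ = ((t N) ^ s)⁻¹ * ‖η (f N)‖ := by
        intro N
        rw [norm_smul, Real.norm_of_nonneg (Real.rpow_nonneg (le_of_lt (hl_pos N)) s),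
          hl, Real.inv_rpow (le_of_lt (ht_pos N))]
      have hηle : ∀ N, ‖η (f N)‖ ≤ (t N) ^ s := by
        intro N
        have h2 : (‖η (f N)‖ ^ s⁻¹) ^ s ≤ (t N) ^ s :=
          Real.rpow_le_rpow (Real.rpow_nonneg (norm_nonneg _) s⁻¹)
            (le_max_right _ _) (le_of_lt hs)
        rwa [Real.rpow_inv_rpow (norm_nonneg _) hsne] at h2
      have hy1 : ∀ N, ‖l N • y (f N)‖ ≤ 1 := by
        intro N
        rw [hnylt]
        show (t N)⁻¹ * ‖y (f N)‖ ≤ 1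
        rw [inv_mul_eq_div, div_le_one (ht_pos N)]
        exact le_max_left _ _
      have hη1 : ∀ N, ‖(l N) ^ s • η (f N)‖ ≤ 1 := by
        intro N
        rw [hnηlt, inv_mul_eq_div, div_le_one (Real.rpow_pos_of_pos (ht_pos N) s)]
        exact hηle N
      have hmax : ∀ N, max ‖l N • y (f N)‖ ‖(l N) ^ s • η (f N)‖ = 1 := by
        intro N
        rcases max_cases ‖y (f N)‖ (‖η (f N)‖ ^ s⁻¹) with ⟨he, -⟩ | ⟨he, -⟩
        · have hteq : t N = ‖y (f N)‖ := he
          have h1' : ‖l N • y (f N)‖ = 1 := by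
            rw [hnylt]
            show (t N)⁻¹ * ‖y (f N)‖ = 1
            rw [← hteq, inv_mul_cancel₀ (ne_of_gt (ht_pos N))]
          rw [max_eq_left (h1' ▸ hη1 N), h1']
        · have hteq : t N = ‖η (f N)‖ ^ s⁻¹ := he
          have hηeq : ‖η (f N)‖ = (t N) ^ s := by
            rw [hteq, Real.rpow_inv_rpow (norm_nonneg _) hsne]
          have h1' : ‖(l N) ^ s • η (f N)‖ = 1 := by
            rw [hnηlt, hηeq, inv_mul_cancel₀ (ne_of_gt (Real.rpow_pos_of_pos (ht_pos N) s))]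
          rw [max_eq_right (h1' ▸ hy1 N), h1']
      -- convergence of the scaled x and ξ parts to 0
      have hinv0 : Tendsto (fun N : ℕ => ((N : ℝ) + 1)⁻¹) atTop (𝓝 0) :=
        (tendsto_atTop_add_const_right atTop 1 tendsto_natCast_atTop_atTop).inv_tendsto_atTop
      have hinvs0 : Tendsto (fun N : ℕ => (((N : ℝ) + 1) ^ s)⁻¹) atTop (𝓝 0) :=
        ((tendsto_rpow_atTop hs).comp
          (tendsto_atTop_add_const_right atTop 1 tendsto_natCast_atTop_atTop)).inv_tendsto_atTop
      have hx0 : Tendsto (fun N => l N • (u (f N)).1) atTop (𝓝 0) := by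
        apply squeeze_zero_norm (a := fun N : ℕ => ((N : ℝ) + 1)⁻¹ * (max Cx 0))
        · intro N
          rw [norm_smul, Real.norm_of_nonneg (le_of_lt (hl_pos N))]
          exact mul_le_mul (hl_le N) (le_trans (hCx' (f N)).1 (le_max_left _ _))
            (norm_nonneg _) (by positivity)
        · simpa using hinv0.mul_const (max Cx 0)
      have hξ0 : Tendsto (fun N => (l N) ^ s • (u (f N)).2) atTop (𝓝 0) := by
        apply squeeze_zero_norm (a := fun N : ℕ => (((N : ℝ) + 1) ^ s)⁻¹ * (max Cx 0))
        · intro N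
          rw [norm_smul, Real.norm_of_nonneg (Real.rpow_nonneg (le_of_lt (hl_pos N)) s)]
          have hls : (l N) ^ s ≤ (((N : ℝ) + 1) ^ s)⁻¹ := by
            rw [← Real.inv_rpow (le_of_lt (hN1 N))]
            exact Real.rpow_le_rpow (le_of_lt (hl_pos N)) (hl_le N) (le_of_lt hs)
          exact mul_le_mul hls (le_trans (hCx' (f N)).2 (le_max_left _ _))
            (norm_nonneg _) (by positivity)
        · simpa using hinvs0.mul_const (max Cx 0)
      -- compactness of scaled witnesses
      set B : ℕ → EuclideanSpace ℝ (Fin d) × EuclideanSpace ℝ (Fin d) :=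
        fun N => (l N • y (f N), (l N) ^ s • η (f N)) with hBdef
      have hball : ∀ N, B N ∈ Metric.closedBall (0 : _ × _) 1 := by
        intro N
        rw [mem_closedBall_zero_iff]
        simp only [hBdef, Prod.norm_def]
        exact max_le (hy1 N) (hη1 N)
      obtain ⟨a, -, φ, hφ, hB⟩ := (isCompact_closedBall
        (0 : EuclideanSpace ℝ (Fin d) × EuclideanSpace ℝ (Fin d)) 1).tendsto_subseq hball
      have ha1 : Tendsto (fun N => l (φ N) • y (f (φ N))) atTop (𝓝 a.1) :=
        (continuous_fst.tendsto a).comp hB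
      have ha2 : Tendsto (fun N => (l (φ N)) ^ s • η (f (φ N))) atTop (𝓝 a.2) :=
        (continuous_snd.tendsto a).comp hB
      have hQ : Tendsto (fun N => ((l (φ N) • (u (f (φ N))).1, l (φ N) • y (f (φ N))),
          ((l (φ N)) ^ s • (u (f (φ N))).2, -((l (φ N)) ^ s • η (f (φ N))))))
          atTop (𝓝 ((0, a.1), (0, -a.2))) :=
        ((hx0.comp hφ.tendsto_atTop).prodMk_nhds ha1).prodMk_nhds
          ((hξ0.comp hφ.tendsto_atTop).prodMk_nhds ha2.neg)
      have hQmem : ∀ N, ((l (φ N) • (u (f (φ N))).1, l (φ N) • y (f (φ N))),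
          ((l (φ N)) ^ s • (u (f (φ N))).2, -((l (φ N)) ^ s • η (f (φ N))))) ∈ WK := by
        intro N
        have := hWKconic (u (f (φ N))).1 (y (f (φ N))) (u (f (φ N))).2 (-η (f (φ N)))
          (hK (f (φ N))) (l (φ N)) (hl_pos (φ N))
        simpa [smul_neg] using this
      have hQcl : ((0, a.1), (0, -a.2)) ∈ closure WK :=
        mem_closure_of_tendsto hQ (Eventually.of_forall hQmem)
      -- the limit is nonzero
      have hmaxa : max ‖a.1‖ ‖a.2‖ = 1 := by
        have h1 : Tendsto (fun N => max ‖l (φ N) • y (f (φ N))‖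
            ‖(l (φ N)) ^ s • η (f (φ N))‖) atTop (𝓝 (max ‖a.1‖ ‖a.2‖)) :=
          ha1.norm.max ha2.norm
        have h2 : Tendsto (fun N => max ‖l (φ N) • y (f (φ N))‖
            ‖(l (φ N)) ^ s • η (f (φ N))‖) atTop (𝓝 1) := by
          simp only [hmax]
          exact tendsto_const_nhds
        exact tendsto_nhds_unique h1 h2
      have hne : ((0, a.1), (0, -a.2)) ≠
          (0 : (EuclideanSpace ℝ (Fin d) × EuclideanSpace ℝ (Fin d)) ×
               (EuclideanSpace ℝ (Fin d) × EuclideanSpace ℝ (Fin d))) := by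
        intro h
        rw [Prod.mk_eq_zero, Prod.mk_eq_zero, Prod.mk_eq_zero] at h
        rw [h.1.2, neg_eq_zero.mp h.2.2] at hmaxa
        simp at hmaxa
      exact h2 a.1 a.2 (hWKclosed _ hne hQcl)
end
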